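/- Let f:ℝ³→[0,∞) satisfy f(v)≥δ for all v∈B_r(v₀), where δ,r>0 and v₀∈ℝ³. Then for all v∈ℝ³ and ξ∈ℝ³, the matrix ā^f(v) = a_γ∫_{ℝ³}(I - w⊗w/|w|²)|w|^{γ+2} f(v-w)dw satisfies ā^f_{ij}(v)ξ_iξ_j ≥ c₁|ξ|²(1+|v|)^γ if ξ∥v and ā^f_{ij}(v)ξ_iξ_j ≥ c₁|ξ|²(1+|v|)^{γ+2} if ξ⊥v, where c₁>0 depends only on δ, r, |v₀|, γ, a_γ. -/

import Mathlib

open MeasureTheory RealInnerProductSpace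

/-- Entry `(i,j)` of the matrix
`ā^f(v) = a_γ ∫ (I - w⊗w/|w|²) |w|^{γ+2} f(v-w) dw`. -/
noncomputable def abarEntry (aγ γ : ℝ) (f : EuclideanSpace ℝ (Fin 3) → ℝ)
    (v : EuclideanSpace ℝ (Fin 3)) (i j : Fin 3) : ℝ :=
  aγ * ∫ w : EuclideanSpace ℝ (Fin 3),
    ((if i = j then (1:ℝ) else 0) - w i * w j / ‖w‖ ^ 2) * ‖w‖ ^ (γ + 2) * f (v - w)

local notation "E3" => EuclideanSpace ℝ (Fin 3)

namespace Stmt11Aux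

lemma norm_sq_eq3 (w : E3) : ‖w‖^2 = ∑ i, w i ^ 2 := by
  rw [EuclideanSpace.norm_eq, Real.sq_sqrt (by positivity)]
  simp [Real.norm_eq_abs, sq_abs]

lemma inner_eq3 (w ξ : E3) : ⟪w,ξ⟫ = ∑ i, w i * ξ i := by
  simp [PiLp.inner_apply, RCLike.inner_apply, conj_trivial]
  exact Finset.sum_congr rfl (fun i _ => mul_comm _ _)

lemma coord_sq_le (w : E3) (i : Fin 3) : w i ^ 2 ≤ ‖w‖^2 := by
  rw [norm_sq_eq3]
  exact Finset.single_le_sum (f := fun j => w j ^ 2) (fun j _ => sq_nonneg _) (Finset.mem_univ i)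

lemma bessel_two (e u w : E3) (he : ‖e‖ = 1) (hu : ‖u‖ = 1) (heu : ⟪e,u⟫ = 0) :
    ⟪w,e⟫^2 + ⟪w,u⟫^2 ≤ ‖w‖^2 := by
  have h0 : (0:ℝ) ≤ ⟪w - ⟪w,e⟫ • e - ⟪w,u⟫ • u, w - ⟪w,e⟫ • e - ⟪w,u⟫ • u⟫ :=
    real_inner_self_nonneg
  have hee : ⟪e,e⟫ = (1:ℝ) := by rw [real_inner_self_eq_norm_sq, he]; norm_num
  have huu : ⟪u,u⟫ = (1:ℝ) := by rw [real_inner_self_eq_norm_sq, hu]; norm_num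
  have hue : ⟪u,e⟫ = (0:ℝ) := by rw [real_inner_comm]; exact heu
  have hwe : ⟪e,w⟫ = ⟪w,e⟫ := real_inner_comm w e
  have hwu : ⟪u,w⟫ = ⟪w,u⟫ := real_inner_comm w u
  have hww : ⟪w,w⟫ = ‖w‖^2 := real_inner_self_eq_norm_sq w
  simp only [inner_sub_left, inner_sub_right, real_inner_smul_left, real_inner_smul_right,
    hee, huu, hue, heu, hwe, hwu, hww] at h0
  nlinarith [h0]

lemma rpow_aux {γ : ℝ} (hγ0 : 0 ≤ γ) (hγ1 : γ ≤ 1) {t : ℝ} (ht : 0 ≤ t) :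
    (1+t)^(γ+2) ≤ 8*(1+t^(γ+2)) := by
  have h2 : (1+t)^(γ+2) ≤ (2*max 1 t)^(γ+2) := by
    apply Real.rpow_le_rpow (by positivity) ?_ (by linarith)
    rcases le_total t 1 with h | h
    · simp [max_eq_left h]; linarith
    · simp [max_eq_right h]; linarith
  have h3 : (2*max 1 t)^(γ+2) = 2^(γ+2) * (max 1 t)^(γ+2) :=
    Real.mul_rpow (by norm_num) (le_max_of_le_left zero_le_one)
  have h4 : (2:ℝ)^(γ+2) ≤ 2^(3:ℝ) := Real.rpow_le_rpow_of_exponent_le (by norm_num) (by linarith)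
  have h5 : (2:ℝ)^(3:ℝ) = 8 := by
    rw [show (3:ℝ) = ((3:ℕ):ℝ) by norm_num, Real.rpow_natCast]; norm_num
  have h6 : (max 1 t)^(γ+2) ≤ 1 + t^(γ+2) := by
    rcases le_total t 1 with h | h
    · simp only [max_eq_left h]
      have := Real.rpow_nonneg ht (γ+2)
      rw [Real.one_rpow]; linarith
    · rw [max_eq_right h]
      have := Real.rpow_nonneg ht (γ+2)
      linarith
  calc (1+t)^(γ+2) ≤ 2^(γ+2) * (max 1 t)^(γ+2) := by rw [← h3]; exact h2
    _ ≤ 8 * (1 + t^(γ+2)) := by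
        apply mul_le_mul (by rw [← h5]; exact h4) h6 (by positivity) (by norm_num)

section
variable {γ : ℝ} {f : E3 → ℝ}

lemma wt_cont (v : E3) (hγ0 : 0 ≤ γ) : Continuous (fun w : E3 => 1 + ‖v - w‖^(γ+2)) := by
  apply continuous_const.add
  apply Continuous.rpow_const ((continuous_const.sub continuous_id).norm)
  intro x; right; linarith

lemma wt_pos (v : E3) (hγ0 : 0 ≤ γ) (w : E3) : (0:ℝ) < 1 + ‖v - w‖^(γ+2) := by positivity

variable (hfI : Integrable (fun w => (1 + ‖w‖ ^ (γ + 2)) * f w))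

include hfI in
lemma comp_int (v : E3) : Integrable (fun w : E3 => (1 + ‖v - w‖^(γ+2)) * f (v - w)) :=
  hfI.comp_sub_left v

include hfI in
lemma f_aesm (v : E3) (hγ0 : 0 ≤ γ) :
    AEStronglyMeasurable (fun w : E3 => f (v - w)) volume := by
  have h1 := (comp_int hfI v).aestronglyMeasurable
  have h2 : AEStronglyMeasurable (fun w : E3 => (1 + ‖v - w‖^(γ+2))⁻¹) volume :=
    ((wt_cont v hγ0).inv₀ (fun w => (wt_pos v hγ0 w).ne')).aestronglyMeasurable
  refine (h1.mul h2).congr (Filter.Eventually.of_forall fun w => ?_)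
  have := (wt_pos v hγ0 w).ne'
  simp only [Pi.mul_apply]
  field_simp

lemma norm_bound (v : E3) (hγ0 : 0 ≤ γ) (hγ1 : γ ≤ 1) (w : E3) :
    ‖w‖^(γ+2) ≤ (8*(1+‖v‖)^(γ+2)) * (1 + ‖v-w‖^(γ+2)) := by
  have h1 : ‖w‖ ≤ (1+‖v‖) * (1+‖v-w‖) := by
    have h0 : ‖v - (v - w)‖ ≤ ‖v‖ + ‖v - w‖ := norm_sub_le _ _
    simp only [sub_sub_cancel] at h0
    nlinarith [norm_nonneg v, norm_nonneg (v - w)]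
  have h2 : ‖w‖^(γ+2) ≤ ((1+‖v‖) * (1+‖v-w‖))^(γ+2) :=
    Real.rpow_le_rpow (norm_nonneg w) h1 (by linarith)
  have h3 : ((1+‖v‖) * (1+‖v-w‖))^(γ+2) = (1+‖v‖)^(γ+2) * (1+‖v-w‖)^(γ+2) :=
    Real.mul_rpow (by positivity) (by positivity)
  have h4 : (1+‖v-w‖)^(γ+2) ≤ 8*(1+‖v-w‖^(γ+2)) := rpow_aux hγ0 hγ1 (norm_nonneg _)
  calc ‖w‖^(γ+2) ≤ (1+‖v‖)^(γ+2) * (1+‖v-w‖)^(γ+2) := by rw [← h3]; exact h2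
    _ ≤ (1+‖v‖)^(γ+2) * (8*(1+‖v-w‖^(γ+2))) := by
        apply mul_le_mul_of_nonneg_left h4 (by positivity)
    _ = (8*(1+‖v‖)^(γ+2)) * (1 + ‖v-w‖^(γ+2)) := by ring

lemma coef_abs_le (w : E3) (i j : Fin 3) :
    |(if i = j then (1:ℝ) else 0) - w i * w j / ‖w‖ ^ 2| ≤ 2 := by
  have hij : |(if i = j then (1:ℝ) else 0)| ≤ 1 := by split <;> norm_num
  have h2 : |w i * w j / ‖w‖^2| ≤ 1 := by
    rcases eq_or_ne w 0 with rfl | hw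
    · simp
    · have hw2 : (0:ℝ) < ‖w‖^2 := pow_pos (norm_pos_iff.mpr hw) 2
      rw [abs_div, abs_of_pos hw2, div_le_one hw2, abs_mul]
      have ha := coord_sq_le w i
      have hb := coord_sq_le w j
      nlinarith [abs_nonneg (w i), abs_nonneg (w j), sq_abs (w i), sq_abs (w j),
        sq_nonneg (|w i| - |w j|)]
  calc |(if i = j then (1:ℝ) else 0) - w i * w j / ‖w‖ ^ 2|
      ≤ |(if i = j then (1:ℝ) else 0)| + |w i * w j / ‖w‖^2| := abs_sub _ _
    _ ≤ 2 := by linarith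

include hfI in
lemma entry_int (hγ0 : 0 ≤ γ) (hγ1 : γ ≤ 1) (hf0 : ∀ v, 0 ≤ f v) (v : E3) (i j : Fin 3) :
    Integrable (fun w : E3 =>
      ((if i = j then (1:ℝ) else 0) - w i * w j / ‖w‖ ^ 2) * ‖w‖ ^ (γ + 2) * f (v - w)) := by
  have hD : Integrable (fun w : E3 =>
      (2 * (8*(1+‖v‖)^(γ+2))) * ((1 + ‖v - w‖^(γ+2)) * f (v - w))) :=
    (comp_int hfI v).const_mul _
  refine hD.mono' ?_ (Filter.Eventually.of_forall fun w => ?_)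
  · have hc : ∀ k : Fin 3, Measurable (fun w : E3 => w k) := fun k =>
      (EuclideanSpace.proj k).continuous.measurable
    have hr : Measurable (fun w : E3 => ‖w‖ ^ (γ+2)) :=
      (continuous_norm.rpow_const (fun x => Or.inr (by linarith))).measurable
    exact (((measurable_const.sub (((hc i).mul (hc j)).div
      (measurable_norm.pow_const 2))).mul hr).aestronglyMeasurable).mul (f_aesm hfI v hγ0)
  · have h1 : |((if i = j then (1:ℝ) else 0) - w i * w j / ‖w‖ ^ 2)| ≤ 2 := coef_abs_le w i j
    have h2 : (0:ℝ) ≤ ‖w‖^(γ+2) := Real.rpow_nonneg (norm_nonneg _) _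
    have h3 : (0:ℝ) ≤ f (v - w) := hf0 _
    have h4 := norm_bound v hγ0 hγ1 w
    have h5 : (0:ℝ) ≤ 1 + ‖v-w‖^(γ+2) := (wt_pos v hγ0 w).le
    rw [Real.norm_eq_abs, abs_mul, abs_mul, abs_of_nonneg h2, abs_of_nonneg h3]
    calc |(if i = j then (1:ℝ) else 0) - w i * w j / ‖w‖ ^ 2| * ‖w‖^(γ+2) * f (v-w)
        ≤ 2 * ‖w‖^(γ+2) * f (v-w) := by
          apply mul_le_mul_of_nonneg_right (mul_le_mul_of_nonneg_right h1 h2) h3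
      _ ≤ 2 * ((8*(1+‖v‖)^(γ+2)) * (1 + ‖v-w‖^(γ+2))) * f (v-w) := by
          apply mul_le_mul_of_nonneg_right (mul_le_mul_of_nonneg_left h4 (by norm_num)) h3
      _ = (2 * (8*(1+‖v‖)^(γ+2))) * ((1 + ‖v - w‖^(γ+2)) * f (v - w)) := by ring

lemma coef2_nonneg (w ξ : E3) : 0 ≤ ‖ξ‖^2 - ⟪w,ξ⟫^2/‖w‖^2 := by
  rcases eq_or_ne w 0 with rfl | hw
  · simp
  · have hw2 : (0:ℝ) < ‖w‖^2 := pow_pos (norm_pos_iff.mpr hw) 2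
    have hcs := real_inner_mul_inner_self_le w ξ
    rw [real_inner_self_eq_norm_sq, real_inner_self_eq_norm_sq] at hcs
    rw [sub_nonneg, div_le_iff₀ hw2]
    nlinarith

lemma coef2_le (w ξ : E3) : ‖ξ‖^2 - ⟪w,ξ⟫^2/‖w‖^2 ≤ ‖ξ‖^2 := by
  have : (0:ℝ) ≤ ⟪w,ξ⟫^2/‖w‖^2 := by positivity
  linarith

include hfI in
lemma F_int (hγ0 : 0 ≤ γ) (hγ1 : γ ≤ 1) (hf0 : ∀ v, 0 ≤ f v) (v ξ : E3) :
    Integrable (fun w : E3 => (‖ξ‖^2 - ⟪w,ξ⟫^2/‖w‖^2) * ‖w‖ ^ (γ + 2) * f (v - w)) := by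
  have hD : Integrable (fun w : E3 =>
      (‖ξ‖^2 * (8*(1+‖v‖)^(γ+2))) * ((1 + ‖v - w‖^(γ+2)) * f (v - w))) :=
    (comp_int hfI v).const_mul _
  refine hD.mono' ?_ (Filter.Eventually.of_forall fun w => ?_)
  · have hi : Measurable (fun w : E3 => ⟪w,ξ⟫) :=
      (continuous_id.inner continuous_const).measurable
    have hr : Measurable (fun w : E3 => ‖w‖ ^ (γ+2)) :=
      (continuous_norm.rpow_const (fun x => Or.inr (by linarith))).measurable
    exact (((measurable_const.sub ((hi.pow_const 2).div
      (measurable_norm.pow_const 2))).mul hr).aestronglyMeasurable).mul (f_aesm hfI v hγ0)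
  · have h1 : |‖ξ‖^2 - ⟪w,ξ⟫^2/‖w‖^2| ≤ ‖ξ‖^2 :=
      abs_le.mpr ⟨by linarith [coef2_nonneg w ξ, sq_nonneg ‖ξ‖], coef2_le w ξ⟩
    have h2 : (0:ℝ) ≤ ‖w‖^(γ+2) := Real.rpow_nonneg (norm_nonneg _) _
    have h3 : (0:ℝ) ≤ f (v - w) := hf0 _
    have h4 := norm_bound v hγ0 hγ1 w
    rw [Real.norm_eq_abs, abs_mul, abs_mul, abs_of_nonneg h2, abs_of_nonneg h3]
    calc |‖ξ‖^2 - ⟪w,ξ⟫^2/‖w‖^2| * ‖w‖^(γ+2) * f (v-w)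
        ≤ ‖ξ‖^2 * ‖w‖^(γ+2) * f (v-w) := by
          apply mul_le_mul_of_nonneg_right (mul_le_mul_of_nonneg_right h1 h2) h3
      _ ≤ ‖ξ‖^2 * ((8*(1+‖v‖)^(γ+2)) * (1 + ‖v-w‖^(γ+2))) * f (v-w) := by
          apply mul_le_mul_of_nonneg_right (mul_le_mul_of_nonneg_left h4 (sq_nonneg _)) h3
      _ = (‖ξ‖^2 * (8*(1+‖v‖)^(γ+2))) * ((1 + ‖v - w‖^(γ+2)) * f (v - w)) := by ring

lemma F_nonneg (hγ0 : 0 ≤ γ) (hf0 : ∀ v, 0 ≤ f v) (v ξ : E3) (w : E3) :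
    0 ≤ (‖ξ‖^2 - ⟪w,ξ⟫^2/‖w‖^2) * ‖w‖ ^ (γ + 2) * f (v - w) :=
  mul_nonneg (mul_nonneg (coef2_nonneg w ξ) (Real.rpow_nonneg (norm_nonneg _) _)) (hf0 _)

lemma sum_ident (ξ w : E3) (m s : ℝ) :
    ∑ i, ∑ j, (((if i = j then (1:ℝ) else 0) - w i * w j / ‖w‖ ^ 2) * m * s) * ξ i * ξ j
      = (‖ξ‖^2 - ⟪w,ξ⟫^2/‖w‖^2) * m * s := by
  rw [norm_sq_eq3 w, norm_sq_eq3 ξ, inner_eq3]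
  simp only [Fin.sum_univ_three, Fin.reduceEq, if_true, if_false, reduceIte]
  ring

include hfI in
lemma quad_repr (aγ : ℝ) (hγ0 : 0 ≤ γ) (hγ1 : γ ≤ 1) (hf0 : ∀ v, 0 ≤ f v) (v ξ : E3) :
    ∑ i, ∑ j, abarEntry aγ γ f v i j * ξ i * ξ j
      = aγ * ∫ w : E3, (‖ξ‖^2 - ⟪w,ξ⟫^2/‖w‖^2) * ‖w‖ ^ (γ + 2) * f (v - w) := by
  have hint : ∀ i j : Fin 3, Integrable (fun w : E3 =>
      (((if i = j then (1:ℝ) else 0) - w i * w j / ‖w‖ ^ 2) * ‖w‖ ^ (γ + 2) * f (v - w))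
        * ξ i * ξ j) := fun i j =>
    ((entry_int hfI hγ0 hγ1 hf0 v i j).mul_const (ξ i)).mul_const (ξ j)
  have step1 : ∀ i j : Fin 3, abarEntry aγ γ f v i j * ξ i * ξ j
      = aγ * ∫ w : E3,
        (((if i = j then (1:ℝ) else 0) - w i * w j / ‖w‖ ^ 2) * ‖w‖ ^ (γ + 2) * f (v - w))
          * ξ i * ξ j := by
    intro i j
    rw [abarEntry, integral_mul_const, integral_mul_const]
    ring
  calc ∑ i, ∑ j, abarEntry aγ γ f v i j * ξ i * ξ j
      = aγ * ∑ i, ∑ j, ∫ w : E3,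
        (((if i = j then (1:ℝ) else 0) - w i * w j / ‖w‖ ^ 2) * ‖w‖ ^ (γ + 2) * f (v - w))
          * ξ i * ξ j := by
        rw [Finset.mul_sum]
        exact Finset.sum_congr rfl fun i _ => by
          rw [Finset.mul_sum]
          exact Finset.sum_congr rfl fun j _ => step1 i j
    _ = aγ * ∫ w : E3, ∑ i, ∑ j,
        (((if i = j then (1:ℝ) else 0) - w i * w j / ‖w‖ ^ 2) * ‖w‖ ^ (γ + 2) * f (v - w))
          * ξ i * ξ j := by
        congr 1
        rw [integral_finset_sum _ (fun i _ => integrable_finset_sum _ (fun j _ => hint i j))]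
        exact Finset.sum_congr rfl fun i _ => (integral_finset_sum _ (fun j _ => hint i j)).symm
    _ = aγ * ∫ w : E3, (‖ξ‖^2 - ⟪w,ξ⟫^2/‖w‖^2) * ‖w‖ ^ (γ + 2) * f (v - w) := by
        congr 1
        exact integral_congr_ae (Filter.Eventually.of_forall fun w => sum_ident ξ w _ _)

end

lemma exists_unit (e z : E3) (he : ‖e‖ = 1) :
    ∃ u : E3, ‖u‖ = 1 ∧ ⟪e,u⟫ = 0 ∧ 0 ≤ ⟪z,u⟫ := by
  have he0 : e ≠ 0 := by intro h; rw [h, norm_zero] at he; norm_num at he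
  set z' := z - ⟪z,e⟫ • e with hz'
  have hee : ⟪e,e⟫ = (1:ℝ) := by rw [real_inner_self_eq_norm_sq, he]; norm_num
  rcases eq_or_ne z' 0 with h0 | h0
  · have hnetop : (ℝ ∙ e) ≠ ⊤ := by
      intro h
      have h1 : Module.finrank ℝ (ℝ ∙ e) = 1 := finrank_span_singleton he0
      have h2 : Module.finrank ℝ (ℝ ∙ e) = 3 := by
        rw [h]
        simpa using (finrank_euclideanSpace_fin (𝕜 := ℝ) (n := 3))
      omega
    have hbot : ((ℝ ∙ e)ᗮ : Submodule ℝ E3) ≠ ⊥ := by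
      intro h
      exact hnetop (Submodule.orthogonal_eq_bot_iff.mp h)
    obtain ⟨x, hx, hx0⟩ := Submodule.exists_mem_ne_zero_of_ne_bot hbot
    have hex : ⟪e,x⟫ = (0:ℝ) := Submodule.mem_orthogonal_singleton_iff_inner_right.mp hx
    refine ⟨‖x‖⁻¹ • x, norm_smul_inv_norm hx0, ?_, ?_⟩
    · rw [real_inner_smul_right, hex, mul_zero]
    · rw [hz'] at h0
      have hz : z = ⟪z,e⟫ • e := sub_eq_zero.mp h0
      rw [hz, real_inner_smul_left, real_inner_smul_right, hex]
      simp
  · refine ⟨‖z'‖⁻¹ • z', norm_smul_inv_norm h0, ?_, ?_⟩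
    · rw [real_inner_smul_right]
      have : ⟪e,z'⟫ = (0:ℝ) := by
        rw [hz', inner_sub_right, real_inner_smul_right, hee, real_inner_comm]
        ring
      rw [this, mul_zero]
    · rw [real_inner_smul_right]
      have h1 : ⟪z,z'⟫ = ‖z‖^2 - ⟪z,e⟫^2 := by
        rw [hz', inner_sub_right, real_inner_smul_right, real_inner_self_eq_norm_sq]
        ring
      have h2 : ⟪z,e⟫^2 ≤ ‖z‖^2 := by
        have := real_inner_mul_inner_self_le z e
        rw [real_inner_self_eq_norm_sq, real_inner_self_eq_norm_sq, he] at this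
        nlinarith
      have h3 : (0:ℝ) ≤ ⟪z,z'⟫ := by rw [h1]; linarith
      positivity

lemma rpow_div_le {K m x ρ : ℝ} (hK1 : 1 ≤ K) (hρ0 : 0 ≤ ρ) (hρ3 : ρ ≤ 3) (hm0 : 0 < m)
    (hx : 0 ≤ x) (h : x ≤ K * m) : x^ρ / K^3 ≤ m^ρ := by
  have hK0 : (0:ℝ) < K := lt_of_lt_of_le one_pos hK1
  have ha1 : (x/K)^ρ ≤ m^ρ :=
    Real.rpow_le_rpow (by positivity) (by rw [div_le_iff₀ hK0]; linarith) hρ0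
  have ha2 : (x/K)^ρ = x^ρ / K^ρ := Real.div_rpow hx hK0.le ρ
  have ha3 : K^ρ ≤ K^3 := by
    have h3 := Real.rpow_le_rpow_of_exponent_le hK1 hρ3
    rwa [show (3:ℝ) = ((3:ℕ):ℝ) by norm_num, Real.rpow_natCast] at h3
  have ha4 : x^ρ / K^3 ≤ x^ρ / K^ρ :=
    div_le_div_of_nonneg_left (Real.rpow_nonneg hx ρ) (Real.rpow_pos_of_pos hK0 ρ) ha3
  rw [ha2] at ha1
  linarith


lemma ball_facts {r : ℝ} (hr : 0 < r) (v₀ v w : E3) (hwz : ‖w - (v - v₀)‖ < r) :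
    ‖v - w‖ ≤ ‖v₀‖ + r ∧ ‖v‖ - ‖v₀‖ - r ≤ ‖w‖ := by
  have heq : v - w = v₀ - (w - (v - v₀)) := by abel
  have h1 : ‖v - w‖ ≤ ‖v₀‖ + r := by
    rw [heq]
    exact (norm_sub_le _ _).trans (by linarith [hwz.le])
  refine ⟨h1, ?_⟩
  have h2 : ‖v‖ ≤ ‖v - w‖ + ‖w‖ := by
    have := norm_add_le (v - w) w
    simpa using this
  linarith
lemma main_lower (γ aγ δ r : ℝ) (hγ0 : 0 ≤ γ) (hγ1 : γ ≤ 1) (ha : 0 < aγ)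
    (hδ : 0 < δ) (hr : 0 < r) (v₀ : E3) (f : E3 → ℝ) (hf0 : ∀ v, 0 ≤ f v)
    (hfI : Integrable (fun w => (1 + ‖w‖ ^ (γ + 2)) * f w))
    (hlow : ∀ v, ‖v - v₀‖ < r → δ ≤ f v) (v ξ : E3) (hξ : ξ ≠ 0) (ρ : ℝ)
    (hgeom : ∀ w : E3, ‖w - (v - v₀)‖ < r →
      (r/4)^2 ≤ ‖w‖^2 - ⟪w, ‖ξ‖⁻¹ • ξ⟫^2 →
      (1+‖v‖)^ρ / (4*(1+‖v₀‖+r)/r + 1)^3 * min ((r/4)^2) 1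
        ≤ ‖w‖^γ * (‖w‖^2 - ⟪w, ‖ξ‖⁻¹ • ξ⟫^2)) :
    (aγ * δ * (min ((r/4)^2) 1 / (4*(1+‖v₀‖+r)/r + 1)^3)
        * (volume (Metric.ball (0:E3) (r/4))).toReal) * ‖ξ‖^2 * (1+‖v‖)^ρ
      ≤ ∑ i, ∑ j, abarEntry aγ γ f v i j * ξ i * ξ j := by
  set e : E3 := ‖ξ‖⁻¹ • ξ with hedef
  have he : ‖e‖ = 1 := norm_smul_inv_norm hξ
  set z : E3 := v - v₀ with hzdef
  obtain ⟨u, hu1, hue, hzu⟩ := exists_unit e z he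
  set p : E3 := z + (r/2) • u with hpdef
  set B : ℝ := (1+‖v‖)^ρ / (4*(1+‖v₀‖+r)/r + 1)^3 * min ((r/4)^2) 1 with hBdef
  have hBpos : 0 < B := by
    have h1 : (0:ℝ) < 4*(1+‖v₀‖+r)/r + 1 := by positivity
    have h2 : (0:ℝ) < min ((r/4)^2) 1 := lt_min (by positivity) one_pos
    have h3 : (0:ℝ) < (1+‖v‖)^ρ := Real.rpow_pos_of_pos (by positivity) ρ
    positivity
  -- pointwise bound on the small ball
  set cpt : ℝ := δ * (‖ξ‖^2 * B) with hcpt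
  have hpt : ∀ w ∈ Metric.ball p (r/4),
      cpt ≤ (‖ξ‖^2 - ⟪w,ξ⟫^2/‖w‖^2) * ‖w‖ ^ (γ + 2) * f (v - w) := by
    intro w hw
    have hwp : ‖w - p‖ < r/4 := by
      rw [Metric.mem_ball, dist_eq_norm] at hw; exact hw
    have hpz : ‖p - z‖ = r/2 := by
      rw [hpdef]
      simp only [add_sub_cancel_left]
      rw [norm_smul, Real.norm_eq_abs, abs_of_pos (by positivity), hu1, mul_one]
    have hwz : ‖w - z‖ < r := by
      calc ‖w - z‖ = ‖(w - p) + (p - z)‖ := by abel_nf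
        _ ≤ ‖w - p‖ + ‖p - z‖ := norm_add_le _ _
        _ < r/4 + r/2 := by rw [hpz]; linarith
        _ ≤ r := by linarith
    have hwu : r/4 ≤ ⟪w,u⟫ := by
      have h1 : ⟪w,u⟫ = ⟪p,u⟫ + ⟪w - p,u⟫ := by
        rw [← inner_add_left]; norm_num
      have h2 : ⟪p,u⟫ = ⟪z,u⟫ + r/2 := by
        rw [hpdef, inner_add_left, real_inner_smul_left, real_inner_self_eq_norm_sq, hu1]
        norm_num
      have h3 : -(r/4) ≤ ⟪w - p,u⟫ := by
        have h4 : |⟪w - p,u⟫| ≤ ‖w - p‖ * ‖u‖ := abs_real_inner_le_norm _ _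
        rw [hu1, mul_one] at h4
        have := neg_abs_le ⟪w - p,u⟫
        linarith
      linarith
    have hA : (r/4)^2 ≤ ‖w‖^2 - ⟪w,e⟫^2 := by
      have h1 := bessel_two e u w he hu1 hue
      have h2 : (r/4)^2 ≤ ⟪w,u⟫^2 := pow_le_pow_left₀ (by positivity) hwu 2
      linarith
    have hB2 := hgeom w hwz hA
    have hw2 : (0:ℝ) < ‖w‖^2 := by nlinarith [sq_nonneg ⟪w,e⟫, sq_nonneg (r/4)]
    have hwpos : (0:ℝ) < ‖w‖ := by nlinarith [norm_nonneg w]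
    have hfδ : δ ≤ f (v - w) := by
      apply hlow
      have heq : (v - w) - v₀ = z - w := by rw [hzdef]; abel
      rw [heq, norm_sub_rev]
      exact hwz
    have hsplit : ⟪w,ξ⟫ = ‖ξ‖ * ⟪w,e⟫ := by
      rw [hedef, real_inner_smul_right]
      have : ‖ξ‖ ≠ 0 := norm_ne_zero_iff.mpr hξ
      field_simp
    have hrpow : ‖w‖^(γ+2) = ‖w‖^γ * ‖w‖^2 := by
      rw [Real.rpow_add hwpos, Real.rpow_two]
    have hFeq : (‖ξ‖^2 - ⟪w,ξ⟫^2/‖w‖^2) * ‖w‖ ^ (γ + 2) * f (v - w)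
        = ‖ξ‖^2 * (‖w‖^γ * (‖w‖^2 - ⟪w,e⟫^2)) * f (v - w) := by
      rw [hsplit, hrpow]
      have hne : ‖w‖^2 ≠ 0 := hw2.ne'
      field_simp
    rw [hFeq]
    have hstep : ‖ξ‖^2 * B ≤ ‖ξ‖^2 * (‖w‖^γ * (‖w‖^2 - ⟪w,e⟫^2)) :=
      mul_le_mul_of_nonneg_left hB2 (sq_nonneg _)
    calc cpt = δ * (‖ξ‖^2 * B) := by rw [hcpt]
      _ ≤ f (v - w) * (‖ξ‖^2 * (‖w‖^γ * (‖w‖^2 - ⟪w,e⟫^2))) := by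
          apply mul_le_mul hfδ hstep (by positivity) (le_trans hδ.le hfδ)
      _ = ‖ξ‖^2 * (‖w‖^γ * (‖w‖^2 - ⟪w,e⟫^2)) * f (v - w) := by ring
  -- integral bounds
  have hFint := F_int hfI hγ0 hγ1 hf0 v ξ
  have h1 : cpt * (volume (Metric.ball p (r/4))).toReal
      ≤ ∫ w in Metric.ball p (r/4), (‖ξ‖^2 - ⟪w,ξ⟫^2/‖w‖^2) * ‖w‖ ^ (γ + 2) * f (v - w) :=
    setIntegral_ge_of_const_le_real measurableSet_ball measure_ball_lt_top.ne hpt hFint.integrableOn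
  have h2 : ∫ w in Metric.ball p (r/4), (‖ξ‖^2 - ⟪w,ξ⟫^2/‖w‖^2) * ‖w‖ ^ (γ + 2) * f (v - w)
      ≤ ∫ w : E3, (‖ξ‖^2 - ⟪w,ξ⟫^2/‖w‖^2) * ‖w‖ ^ (γ + 2) * f (v - w) :=
    setIntegral_le_integral hFint (Filter.Eventually.of_forall (F_nonneg hγ0 hf0 v ξ))
  have h3 : volume (Metric.ball p (r/4)) = volume (Metric.ball (0:E3) (r/4)) :=
    Measure.addHaar_ball_center volume p (r/4)
  rw [h3] at h1
  rw [quad_repr hfI aγ hγ0 hγ1 hf0 v ξ]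
  calc (aγ * δ * (min ((r/4)^2) 1 / (4*(1+‖v₀‖+r)/r + 1)^3)
        * (volume (Metric.ball (0:E3) (r/4))).toReal) * ‖ξ‖^2 * (1+‖v‖)^ρ
      = aγ * (cpt * (volume (Metric.ball (0:E3) (r/4))).toReal) := by
        rw [hcpt, hBdef]; ring
    _ ≤ aγ * ∫ w : E3, (‖ξ‖^2 - ⟪w,ξ⟫^2/‖w‖^2) * ‖w‖ ^ (γ + 2) * f (v - w) :=
        mul_le_mul_of_nonneg_left (h1.trans h2) ha.le

end Stmt11Aux

set_option maxHeartbeats 1000000 in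
/-- Lower ellipticity of `ā^f` under a local lower bound `f ≥ δ` on `B_r(v₀)`:
the quadratic form is `≥ c₁ |ξ|² (1+|v|)^γ` for `ξ ∥ v` and
`≥ c₁ |ξ|² (1+|v|)^{γ+2}` for `ξ ⊥ v`. -/
theorem stmt11 (γ aγ δ r : ℝ) (hγ0 : 0 ≤ γ) (hγ1 : γ ≤ 1) (ha : 0 < aγ)
    (hδ : 0 < δ) (hr : 0 < r) (v₀ : EuclideanSpace ℝ (Fin 3))
    (f : EuclideanSpace ℝ (Fin 3) → ℝ) (hf0 : ∀ v, 0 ≤ f v)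
    (hfI : Integrable (fun w => (1 + ‖w‖ ^ (γ + 2)) * f w))
    (hlow : ∀ v, ‖v - v₀‖ < r → δ ≤ f v) :
    ∃ c₁ > (0:ℝ),
      (∀ v ξ : EuclideanSpace ℝ (Fin 3), (∃ s : ℝ, ξ = s • v) →
        c₁ * ‖ξ‖ ^ 2 * (1 + ‖v‖) ^ γ
          ≤ ∑ i, ∑ j, abarEntry aγ γ f v i j * ξ i * ξ j) ∧
      (∀ v ξ : EuclideanSpace ℝ (Fin 3), ⟪ξ, v⟫ = (0:ℝ) →
        c₁ * ‖ξ‖ ^ 2 * (1 + ‖v‖) ^ (γ + 2)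
          ≤ ∑ i, ∑ j, abarEntry aγ γ f v i j * ξ i * ξ j) := by
  have hVol : 0 < (volume (Metric.ball (0:E3) (r/4))).toReal :=
    ENNReal.toReal_pos (Metric.measure_ball_pos volume 0 (by positivity)).ne'
      measure_ball_lt_top.ne
  have hmin : (0:ℝ) < min ((r/4)^2) 1 := lt_min (by positivity) one_pos
  have hKpos : (0:ℝ) < 4*(1+‖v₀‖+r)/r + 1 := by positivity
  have hK1 : (1:ℝ) ≤ 4*(1+‖v₀‖+r)/r + 1 := by
    have h0 : (0:ℝ) ≤ 4*(1+‖v₀‖+r)/r := by positivity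
    linarith
  have hKm_of : ∀ v : E3, 1 + ‖v‖ ≤ (4*(1+‖v₀‖+r)/r + 1) * max (r/4) (‖v‖ - ‖v₀‖ - r) := by
    intro v
    have h1 : r/4 ≤ max (r/4) (‖v‖ - ‖v₀‖ - r) := le_max_left _ _
    have h2 : ‖v‖ - ‖v₀‖ - r ≤ max (r/4) (‖v‖ - ‖v₀‖ - r) := le_max_right _ _
    have h4 : (1+‖v₀‖+r) ≤ 4*(1+‖v₀‖+r)/r * max (r/4) (‖v‖ - ‖v₀‖ - r) := by
      rw [div_mul_eq_mul_div, le_div_iff₀ hr]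
      nlinarith [norm_nonneg v₀]
    nlinarith [norm_nonneg v₀]
  refine ⟨aγ * δ * (min ((r/4)^2) 1 / (4*(1+‖v₀‖+r)/r + 1)^3)
      * (volume (Metric.ball (0:E3) (r/4))).toReal, ?_, ?_, ?_⟩
  · have h0 : (0:ℝ) < min ((r/4)^2) 1 / (4*(1+‖v₀‖+r)/r + 1)^3 := by positivity
    exact mul_pos (mul_pos (mul_pos ha hδ) h0) hVol
  · -- parallel / arbitrary direction case, exponent γ
    intro v ξ _
    rcases eq_or_ne ξ 0 with rfl | hξ
    · have hzero : aγ * δ * (min ((r/4)^2) 1 / (4*(1+‖v₀‖+r)/r + 1)^3)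
          * (volume (Metric.ball (0:E3) (r/4))).toReal * ‖(0:E3)‖ ^ 2 * (1 + ‖v‖) ^ γ = 0 := by
        simp
      rw [hzero, Stmt11Aux.quad_repr hfI aγ hγ0 hγ1 hf0 v 0]
      exact mul_nonneg ha.le (integral_nonneg (Stmt11Aux.F_nonneg hγ0 hf0 v 0))
    · apply Stmt11Aux.main_lower γ aγ δ r hγ0 hγ1 ha hδ hr v₀ f hf0 hfI hlow v ξ hξ γ
      intro w hwz hA
      obtain ⟨hvw, hwv⟩ := Stmt11Aux.ball_facts hr v₀ v w hwz
      have hwn : r/4 ≤ ‖w‖ := by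
        nlinarith [sq_nonneg ⟪w, ‖ξ‖⁻¹ • ξ⟫, norm_nonneg w]
      set m : ℝ := max (r/4) (‖v‖ - ‖v₀‖ - r) with hm
      have hm0 : (0:ℝ) < m := lt_of_lt_of_le (by positivity) (le_max_left _ _)
      have hmw : m ≤ ‖w‖ := max_le hwn hwv
      have h10 : (1+‖v‖)^γ / (4*(1+‖v₀‖+r)/r + 1)^3 ≤ m^γ :=
        Stmt11Aux.rpow_div_le hK1 hγ0 (by linarith) hm0 (by positivity) (hKm_of v)
      have hwγ : m^γ ≤ ‖w‖^γ := Real.rpow_le_rpow hm0.le hmw hγ0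
      have hA' : min ((r/4)^2) 1 ≤ ‖w‖^2 - ⟪w, ‖ξ‖⁻¹ • ξ⟫^2 := le_trans (min_le_left _ _) hA
      exact mul_le_mul (h10.trans hwγ) hA' hmin.le (Real.rpow_nonneg (norm_nonneg w) γ)
  · -- perpendicular case, exponent γ+2
    intro v ξ hperp
    rcases eq_or_ne ξ 0 with rfl | hξ
    · have hzero : aγ * δ * (min ((r/4)^2) 1 / (4*(1+‖v₀‖+r)/r + 1)^3)
          * (volume (Metric.ball (0:E3) (r/4))).toReal * ‖(0:E3)‖ ^ 2 * (1 + ‖v‖) ^ (γ+2) = 0 := by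
        simp
      rw [hzero, Stmt11Aux.quad_repr hfI aγ hγ0 hγ1 hf0 v 0]
      exact mul_nonneg ha.le (integral_nonneg (Stmt11Aux.F_nonneg hγ0 hf0 v 0))
    · apply Stmt11Aux.main_lower γ aγ δ r hγ0 hγ1 ha hδ hr v₀ f hf0 hfI hlow v ξ hξ (γ+2)
      intro w hwz hA
      obtain ⟨hvw, hwv⟩ := Stmt11Aux.ball_facts hr v₀ v w hwz
      have he : ‖(‖ξ‖⁻¹ • ξ : E3)‖ = 1 := norm_smul_inv_norm hξ
      set m : ℝ := max (r/4) (‖v‖ - ‖v₀‖ - r) with hm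
      have hm0 : (0:ℝ) < m := lt_of_lt_of_le (by positivity) (le_max_left _ _)
      have hmA : m^2 ≤ ‖w‖^2 - ⟪w, ‖ξ‖⁻¹ • ξ⟫^2 := by
        rcases le_total (‖v‖ - ‖v₀‖ - r) (r/4) with hle | hle
        · have hmeq : m = r/4 := by rw [hm]; exact max_eq_left hle
          rw [hmeq]; exact hA
        · have hmeq : m = ‖v‖ - ‖v₀‖ - r := by rw [hm]; exact max_eq_right hle
          have hv0 : (0:ℝ) < ‖v‖ := by nlinarith [norm_nonneg v₀]
          have hvne : v ≠ 0 := norm_pos_iff.mp hv0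
          have hn : ‖(‖v‖⁻¹ • v : E3)‖ = 1 := norm_smul_inv_norm hvne
          have hen : ⟪(‖ξ‖⁻¹ • ξ : E3), (‖v‖⁻¹ • v : E3)⟫ = 0 := by
            rw [real_inner_smul_left, real_inner_smul_right, hperp]
            ring
          have hb := Stmt11Aux.bessel_two (‖ξ‖⁻¹ • ξ) (‖v‖⁻¹ • v) w he hn hen
          have hwn' : ‖v‖ - ‖v₀‖ - r ≤ ⟪w, (‖v‖⁻¹ • v : E3)⟫ := by
            have h4 : ⟪w,v⟫ = ⟪v,v⟫ - ⟪v - w, v⟫ := by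
              rw [← inner_sub_left]
              norm_num
            have h5 : ⟪v - w, v⟫ ≤ ‖v - w‖ * ‖v‖ := real_inner_le_norm _ _
            have h7 : (‖v‖ - ‖v₀‖ - r) * ‖v‖ ≤ ⟪w,v⟫ := by
              have hvv : ⟪v,v⟫ = ‖v‖^2 := real_inner_self_eq_norm_sq v
              nlinarith
            have h6 : ⟪w, (‖v‖⁻¹ • v : E3)⟫ = ‖v‖⁻¹ * ⟪w,v⟫ := real_inner_smul_right _ _ _
            rw [h6]
            calc ‖v‖ - ‖v₀‖ - r = ‖v‖⁻¹ * ((‖v‖ - ‖v₀‖ - r) * ‖v‖) := by field_simp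
              _ ≤ ‖v‖⁻¹ * ⟪w,v⟫ := mul_le_mul_of_nonneg_left h7 (inv_nonneg.mpr hv0.le)
          have h8 : (‖v‖ - ‖v₀‖ - r)^2 ≤ ⟪w, (‖v‖⁻¹ • v : E3)⟫^2 :=
            pow_le_pow_left₀ (by linarith [hr]) hwn' 2
          rw [hmeq]
          linarith
      have hmw : m ≤ ‖w‖ := by
        nlinarith [sq_nonneg ⟪w, ‖ξ‖⁻¹ • ξ⟫, norm_nonneg w]
      have h9 : m^(γ+2) ≤ ‖w‖^γ * (‖w‖^2 - ⟪w, ‖ξ‖⁻¹ • ξ⟫^2) := by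
        have hsp : m^(γ+2) = m^γ * m^2 := by rw [Real.rpow_add hm0, Real.rpow_two]
        rw [hsp]
        exact mul_le_mul (Real.rpow_le_rpow hm0.le hmw hγ0) hmA (by positivity)
          (Real.rpow_nonneg (norm_nonneg w) γ)
      have h10 : (1+‖v‖)^(γ+2) / (4*(1+‖v₀‖+r)/r + 1)^3 ≤ m^(γ+2) :=
        Stmt11Aux.rpow_div_le hK1 (by linarith) (by linarith) hm0 (by positivity) (hKm_of v)
      have h11 : (1+‖v‖)^(γ+2) / (4*(1+‖v₀‖+r)/r + 1)^3 * min ((r/4)^2) 1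
          ≤ (1+‖v‖)^(γ+2) / (4*(1+‖v₀‖+r)/r + 1)^3 :=
        mul_le_of_le_one_right (by positivity) (min_le_right _ _)
      linarith
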